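/- Let p be a probability density on ℝ with p(x) ≥ c x^{-2} for all |x| ≥ 1 (with c > 0), and let N be the centered Gaussian density with variance σ² > 0. Then there exist c₁ > 0 and M > 0 such that the convolution (p * N)(y) ≥ c₁ y^{-2} for all |y| ≥ M. -/

import Mathlib

open MeasureTheory Real

theorem gaussian_convolution_tail_lower_bound (p : ℝ → ℝ) (hpmeas : Measurable p)
    (hp0 : ∀ x, 0 ≤ p x) (hpint : Integrable p) (hp1 : ∫ x : ℝ, p x = 1)
    (c : ℝ) (hc : 0 < c) (htail : ∀ x : ℝ, 1 ≤ |x| → c / x ^ 2 ≤ p x)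
    (σ : ℝ) (hσ : 0 < σ) :
    ∃ c₁ M : ℝ, 0 < c₁ ∧ 0 < M ∧ ∀ y : ℝ, M ≤ |y| →
      c₁ / y ^ 2 ≤
        ∫ x : ℝ, p (y - x) * ((Real.sqrt (2 * Real.pi * σ ^ 2))⁻¹ * Real.exp (-(x ^ 2) / (2 * σ ^ 2))) := by
  set A : ℝ := (Real.sqrt (2 * Real.pi * σ ^ 2))⁻¹ with hA
  have hσ2 : (0:ℝ) < 2 * Real.pi * σ ^ 2 := by positivity
  have hApos : 0 < A := by
    rw [hA]
    exact inv_pos.mpr (Real.sqrt_pos.mpr hσ2)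
  set K : ℝ := A * Real.exp (-1 / (2 * σ ^ 2)) with hK
  have hKpos : 0 < K := by positivity
  refine ⟨c * K / 2, 2, by positivity, by norm_num, fun y hy => ?_⟩
  have hy0 : y ≠ 0 := by
    intro h; rw [h] at hy; simp at hy; linarith
  have hy2 : (0:ℝ) < y ^ 2 := by positivity
  -- the gaussian factor
  set G : ℝ → ℝ := fun x => A * Real.exp (-(x ^ 2) / (2 * σ ^ 2)) with hG
  have hGmeas : Measurable G := by
    apply Measurable.const_mul
    exact (Real.measurable_exp).comp ((measurable_id.pow_const 2).neg.div_const _)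
  have hGnonneg : ∀ x, 0 ≤ G x := fun x => by positivity
  have hGbdd : ∀ x, ‖G x‖ ≤ A := by
    intro x
    rw [Real.norm_eq_abs, abs_of_nonneg (hGnonneg x), hG]
    have : Real.exp (-(x ^ 2) / (2 * σ ^ 2)) ≤ 1 := by
      apply Real.exp_le_one_iff.mpr
      apply div_nonpos_of_nonpos_of_nonneg <;> [nlinarith; positivity]
    nlinarith
  -- integrability of the integrand
  have hint : Integrable (fun x => p (y - x) * G x) := by
    have h1 : Integrable (fun x => p (y - x)) := hpint.comp_sub_left y
    have h2 : Integrable (fun x => G x * p (y - x)) :=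
      h1.bdd_mul (c := A) hGmeas.aestronglyMeasurable (Filter.Eventually.of_forall hGbdd)
    exact h2.congr (Filter.Eventually.of_forall fun x => mul_comm _ _)
  have hnonneg : ∀ x, 0 ≤ p (y - x) * G x := fun x =>
    mul_nonneg (hp0 _) (hGnonneg x)
  -- pointwise lower bound on [-1, 1]
  have hpoint : ∀ x ∈ Set.Icc (-1:ℝ) 1, c / (4 * y ^ 2) * K ≤ p (y - x) * G x := by
    intro x hx
    obtain ⟨hx1, hx2⟩ := hx
    have habs : |x| ≤ 1 := abs_le.mpr ⟨hx1, hx2⟩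
    have h1 : 1 ≤ |y - x| := by
      have := abs_sub_abs_le_abs_sub y x
      have : |y| - |x| ≤ |y - x| := this
      linarith
    have hle : (y - x) ^ 2 ≤ 4 * y ^ 2 := by
      have : |y - x| ≤ |y| + |x| := abs_sub y x
      have h2 : |y - x| ≤ 2 * |y| := by
        have : |x| ≤ |y| := le_trans habs (by linarith)
        linarith
      have h3 : |y - x| ^ 2 ≤ (2 * |y|) ^ 2 := by
        apply pow_le_pow_left₀ (abs_nonneg _) h2
      calc (y - x) ^ 2 = |y - x| ^ 2 := (sq_abs _).symm
        _ ≤ (2 * |y|) ^ 2 := h3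
        _ = 4 * y ^ 2 := by rw [mul_pow, sq_abs]; ring
    have hp : c / (4 * y ^ 2) ≤ p (y - x) := by
      refine le_trans ?_ (htail _ h1)
      apply div_le_div_of_nonneg_left (le_of_lt hc) _ hle
      have : (0:ℝ) < |y - x| := lt_of_lt_of_le one_pos h1
      calc (0:ℝ) < |y - x| ^ 2 := by positivity
        _ = (y - x) ^ 2 := sq_abs _
    have hGlow : K ≤ G x := by
      rw [hK, hG]
      apply mul_le_mul_of_nonneg_left _ (le_of_lt hApos)
      apply Real.exp_le_exp.mpr
      apply div_le_div_of_nonneg_right _ (by positivity)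
      nlinarith [sq_abs x, sq_nonneg x]
    calc c / (4 * y ^ 2) * K ≤ p (y - x) * K := by
          apply mul_le_mul_of_nonneg_right hp (le_of_lt hKpos)
      _ ≤ p (y - x) * G x := mul_le_mul_of_nonneg_left hGlow (hp0 _)
  -- chain of inequalities
  have step1 : ∫ x in Set.Icc (-1:ℝ) 1, p (y - x) * G x ≤ ∫ x, p (y - x) * G x :=
    setIntegral_le_integral hint (Filter.Eventually.of_forall hnonneg)
  have step2 : ∫ x in Set.Icc (-1:ℝ) 1, (c / (4 * y ^ 2) * K) ≤
      ∫ x in Set.Icc (-1:ℝ) 1, p (y - x) * G x := by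
    apply setIntegral_mono_on
    · exact integrableOn_const (by simp [Real.volume_Icc])
    · exact hint.integrableOn
    · exact measurableSet_Icc
    · exact hpoint
  have step3 : ∫ x in Set.Icc (-1:ℝ) 1, (c / (4 * y ^ 2) * K) = c * K / 2 / y ^ 2 := by
    rw [setIntegral_const]
    rw [Real.volume_real_Icc]
    norm_num
    field_simp
    ring
  calc c * K / 2 / y ^ 2 = ∫ x in Set.Icc (-1:ℝ) 1, (c / (4 * y ^ 2) * K) := step3.symm
    _ ≤ ∫ x in Set.Icc (-1:ℝ) 1, p (y - x) * G x := step2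
    _ ≤ ∫ x, p (y - x) * G x := step1
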